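/- Let h, σ, V > 0 and B̃ < 0. Define Ξ(p) = −B̃·log₂(1 + h·p/σ) − (h/((σ + h·p)·ln 2))·(V − B̃·p). Then Ξ is strictly increasing on [0, ∞), Ξ(0) = −h·V/(σ·ln 2) < 0, and Ξ(p) → +∞ as p → +∞; consequently there exists a unique p₀ ∈ (0, ∞) with Ξ(p₀) = 0. -/

import Mathlib

open Filter Topology

lemma hasDerivAt_Xi (h σ V Btilde : ℝ) (hh : 0 < h) (hσ : 0 < σ)
    (x : ℝ) (hx : 0 ≤ x) :
    HasDerivAt (fun p => -Btilde * Real.logb 2 (1 + h * p / σ)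
      - (h / ((σ + h * p) * Real.log 2)) * (V - Btilde * p))
      (h ^ 2 * (V - Btilde * x) / ((σ + h * x) ^ 2 * Real.log 2)) x := by
  have hu : 0 < σ + h * x := by positivity
  have hu' : (σ + h * x) ≠ 0 := ne_of_gt hu
  have hlog2 : Real.log 2 ≠ 0 := ne_of_gt (Real.log_pos one_lt_two)
  have harg : 0 < 1 + h * x / σ := by positivity
  have h1 : HasDerivAt (fun p => 1 + h * p / σ) (h / σ) x := by
    simpa using (((hasDerivAt_id x).const_mul h).div_const σ).const_add 1
  have h2 : HasDerivAt (fun p => Real.log (1 + h * p / σ))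
      ((1 + h * x / σ)⁻¹ * (h / σ)) x := by
    have := (Real.hasDerivAt_log (ne_of_gt harg)).comp x h1; exact this
  have h3 : HasDerivAt (fun p => -Btilde * (Real.log (1 + h * p / σ) / Real.log 2))
      (-Btilde * ((1 + h * x / σ)⁻¹ * (h / σ) / Real.log 2)) x :=
    (h2.div_const (Real.log 2)).const_mul (-Btilde)
  have h4 : HasDerivAt (fun p => (σ + h * p) * Real.log 2) (h * Real.log 2) x := by
    simpa using (((hasDerivAt_id x).const_mul h).const_add σ).mul_const (Real.log 2)
  have h5 : HasDerivAt (fun p => h / ((σ + h * p) * Real.log 2))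
      (h * (-(h * Real.log 2) / ((σ + h * x) * Real.log 2) ^ 2)) x := by
    simpa [div_eq_mul_inv] using (h4.inv (by positivity)).const_mul h
  have h6 : HasDerivAt (fun p => V - Btilde * p) (-Btilde) x := by
    have := ((hasDerivAt_const x V).sub ((hasDerivAt_id x).const_mul Btilde) :
      HasDerivAt (fun p => V - Btilde * p) (0 - Btilde * 1) x)
    rwa [zero_sub, mul_one] at this
  have h7 : HasDerivAt (fun p => -Btilde * (Real.log (1 + h * p / σ) / Real.log 2)
      - (h / ((σ + h * p) * Real.log 2)) * (V - Btilde * p)) _ x := h3.sub (h5.mul h6)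
  have heq : (fun p => -Btilde * (Real.log (1 + h * p / σ) / Real.log 2)
      - (h / ((σ + h * p) * Real.log 2)) * (V - Btilde * p))
      = (fun p => -Btilde * Real.logb 2 (1 + h * p / σ)
      - (h / ((σ + h * p) * Real.log 2)) * (V - Btilde * p)) := by
    funext p; simp [Real.logb]
  rw [heq] at h7
  convert h7 using 1
  field_simp
  ring

theorem stmt_9 (h σ V Btilde : ℝ) (hh : 0 < h) (hσ : 0 < σ) (hV : 0 < V)
    (hB : Btilde < 0)
    (Ξ : ℝ → ℝ)
    (hΞ : ∀ p, Ξ p = -Btilde * Real.logb 2 (1 + h * p / σ)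
      - (h / ((σ + h * p) * Real.log 2)) * (V - Btilde * p)) :
    StrictMonoOn Ξ (Set.Ici 0) ∧
    Ξ 0 = -(h * V) / (σ * Real.log 2) ∧
    Ξ 0 < 0 ∧
    Tendsto Ξ atTop atTop ∧
    (∃! p₀ : ℝ, p₀ ∈ Set.Ioi (0 : ℝ) ∧ Ξ p₀ = 0) := by
  have hΞfun : Ξ = fun p => -Btilde * Real.logb 2 (1 + h * p / σ)
      - (h / ((σ + h * p) * Real.log 2)) * (V - Btilde * p) := funext hΞ
  subst hΞfun
  set Ξ : ℝ → ℝ := fun p => -Btilde * Real.logb 2 (1 + h * p / σ)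
      - (h / ((σ + h * p) * Real.log 2)) * (V - Btilde * p) with hXdef
  have hlog2 : 0 < Real.log 2 := Real.log_pos one_lt_two
  have hderiv : ∀ x : ℝ, 0 ≤ x → HasDerivAt Ξ
      (h ^ 2 * (V - Btilde * x) / ((σ + h * x) ^ 2 * Real.log 2)) x :=
    fun x hx => hasDerivAt_Xi h σ V Btilde hh hσ x hx
  have hcont : ContinuousOn Ξ (Set.Ici 0) :=
    fun x hx => ((hderiv x hx).continuousAt).continuousWithinAt
  -- strict monotonicity
  have hmono : StrictMonoOn Ξ (Set.Ici 0) := by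
    apply StrictMonoOn.mono (s := Set.Ici (0:ℝ)) ?_ (le_refl _)
    exact strictMonoOn_of_deriv_pos (convex_Ici 0) hcont (by
      intro x hx
      rw [interior_Ici] at hx
      have hx0 : 0 ≤ x := le_of_lt hx
      rw [(hderiv x hx0).deriv]
      have h1 : 0 < V - Btilde * x :=
        lt_of_lt_of_le hV (by nlinarith)
      positivity)
  -- value at 0
  have hval : Ξ 0 = -(h * V) / (σ * Real.log 2) := by
    simp [hXdef]
    field_simp
  have hneg : Ξ 0 < 0 := by
    rw [hval]
    apply div_neg_of_neg_of_pos
    · nlinarith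
    · positivity
  -- tendsto atTop
  have hA : Tendsto (fun p => -Btilde * Real.logb 2 (1 + h * p / σ)) atTop atTop := by
    apply Tendsto.const_mul_atTop (by linarith : (0:ℝ) < -Btilde)
    apply (Real.tendsto_logb_atTop one_lt_two).comp
    apply tendsto_atTop_add_const_left
    exact (tendsto_id.const_mul_atTop (by positivity : (0:ℝ) < h)).atTop_div_const hσ
  set C : ℝ := h * V / (σ * Real.log 2) + (-Btilde) / Real.log 2 with hC
  have hbound : ∀ p : ℝ, 0 ≤ p → -Btilde * Real.logb 2 (1 + h * p / σ) - C ≤ Ξ p := by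
    intro p hp
    have hu : 0 < σ + h * p := by positivity
    have hT : (h / ((σ + h * p) * Real.log 2)) * (V - Btilde * p) ≤ C := by
      have e1 : (h / ((σ + h * p) * Real.log 2)) * (V - Btilde * p)
          = h * V / ((σ + h * p) * Real.log 2)
            + (-Btilde) * (h * p / (σ + h * p)) / Real.log 2 := by
        field_simp; ring
      rw [e1, hC]
      have hp0 : 0 ≤ h * p := by positivity
      have hfrac : h * p / (σ + h * p) ≤ 1 := by rw [div_le_one hu]; linarith
      have g1 : h * V / ((σ + h * p) * Real.log 2) ≤ h * V / (σ * Real.log 2) := by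
        gcongr
        linarith
      have g2 : -Btilde * (h * p / (σ + h * p)) / Real.log 2 ≤ -Btilde / Real.log 2 := by
        rw [div_le_div_iff_of_pos_right hlog2]
        nlinarith
      linarith
    simp only [hXdef]
    linarith
  have htop : Tendsto Ξ atTop atTop := by
    apply tendsto_atTop_mono' atTop ?_ (tendsto_atTop_add_const_right atTop (-C) hA)
    filter_upwards [eventually_ge_atTop (0:ℝ)] with p hp
    have := hbound p hp
    linarith
  -- existence and uniqueness of root
  obtain ⟨M, hM⟩ := (htop.eventually (eventually_gt_atTop 0)).exists_forall_of_atTop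
  set M' : ℝ := max M 1 with hM'
  have hM'1 : (1:ℝ) ≤ M' := le_max_right _ _
  have hM'pos : 0 < Ξ M' := hM M' (le_max_left _ _)
  have hsub : Set.Icc (0:ℝ) M' ⊆ Set.Ici 0 := fun x hx => hx.1
  have hivt : (0:ℝ) ∈ Ξ '' Set.Ioo 0 M' := by
    apply intermediate_value_Ioo (by linarith) (hcont.mono hsub)
    exact ⟨hneg, hM'pos⟩
  obtain ⟨p₀, hp₀mem, hp₀⟩ := hivt
  refine ⟨hmono, hval, hneg, htop, p₀, ⟨hp₀mem.1, hp₀⟩, ?_⟩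
  rintro q ⟨hq, hq0⟩
  exact hmono.injOn (Set.mem_Ici.mpr (le_of_lt hq)) (Set.mem_Ici.mpr (le_of_lt hp₀mem.1)) (by rw [hq0, hp₀])
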